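/- For all integers i ≥ 0 and k ≥ 0, as equalities of K-linear endomorphisms of the Grassmann algebra Λ: (i) v_i ∘ v_{i+3k} + v_{i+3k} ∘ v_i = 2·(∏_{l=0}^{k−1} x_{i+3l} x_{i+3l+1}) ∘ x_{i+3k+1} ∘ v_{i+3k+3}; (ii) v_i ∘ v_{i+3k+1} + v_{i+3k+1} ∘ v_i = −(∏_{l=0}^{k−1} x_{i+3l} x_{i+3l+1}) ∘ x_{i+3k} ∘ v_{i+3k+3}; (iii) v_i ∘ v_{i+3k+2} + v_{i+3k+2} ∘ v_i = −(∏_{l=0}^{k} x_{i+3l} x_{i+3l+1}) ∘ x_{i+3k+2} ∘ v_{i+3k+5}. -/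

import Mathlib

/-- The Grassmann algebra `Λ(x_i ∣ i ≥ 0)`: the exterior algebra over `K` of the free
`K`-module with basis indexed by `ℕ`. -/
noncomputable abbrev GrassmannAlgebra (K : Type*) [Field K] :=
  ExteriorAlgebra K (ℕ →₀ K)

/-- The `i`-th Grassmann generator `x_i ∈ Λ`. -/
noncomputable def grassGen (K : Type*) [Field K] (i : ℕ) : GrassmannAlgebra K :=
  ExteriorAlgebra.ι K (Finsupp.single i 1)

/-- The operator of left multiplication by `x_i` on `Λ`. -/
noncomputable def grassMul (K : Type*) [Field K] (i : ℕ) :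
    Module.End K (GrassmannAlgebra K) :=
  LinearMap.mulLeft K (grassGen K i)

namespace Stmt17

/-- abstract ring lemmas -/
theorem comm_mul {R : Type*} [Ring R] {s b c : R} (hb : s * b = b * s) (hc : s * c = c * s) :
    s * (b * c) = (b * c) * s := by
  rw [← mul_assoc, hb, mul_assoc, hc, mul_assoc]

theorem comm_of_two_anti {R : Type*} [Ring R] {s b c : R} (hb : s * b + b * s = 0)
    (hc : s * c + c * s = 0) : s * (b * c) = (b * c) * s := by
  have hb' : s * b = -(b * s) := eq_neg_of_add_eq_zero_left hb
  have hc' : s * c = -(c * s) := eq_neg_of_add_eq_zero_left hc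
  calc s * (b * c) = (s * b) * c := (mul_assoc _ _ _).symm
    _ = -(b * (s * c)) := by rw [hb', neg_mul, mul_assoc]
    _ = b * (c * s) := by rw [hc', mul_neg, neg_neg]
    _ = (b * c) * s := (mul_assoc _ _ _).symm

theorem expand1 {R : Type*} [Ring R] (s dm a v' c e : R) (h1 : s * dm + dm * s = c)
    (h2 : s * a = a * s + e) :
    s * (dm + a * v') + (dm + a * v') * s = c + e * v' + a * (s * v' + v' * s) := by
  have : s * (dm + a * v') + (dm + a * v') * s
      = (s * dm + dm * s) + ((s * a) * v' + a * (v' * s)) := by noncomm_ring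
  rw [this, h1, h2, add_mul, mul_assoc, mul_add]
  abel

variable {K : Type*} [Field K]

theorem x_swap_add (i j : ℕ) : grassMul K i * grassMul K j + grassMul K j * grassMul K i = 0 := by
  have h := ExteriorAlgebra.ι_add_mul_swap (R := K) (Finsupp.single i (1:K)) (Finsupp.single j 1)
  have e : ∀ p q : ℕ, grassMul K p * grassMul K q
      = LinearMap.mulLeft K (grassGen K p * grassGen K q) := by
    intro p q
    rw [LinearMap.mulLeft_mul, Module.End.mul_eq_comp]; rfl
  have hadd : LinearMap.mulLeft K (grassGen K i * grassGen K j)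
      + LinearMap.mulLeft K (grassGen K j * grassGen K i)
      = LinearMap.mulLeft K (grassGen K i * grassGen K j + grassGen K j * grassGen K i) :=
    LinearMap.ext fun w => (add_mul _ _ w).symm
  have h0 : grassGen K i * grassGen K j + grassGen K j * grassGen K i = 0 := h
  rw [e, e, hadd, h0]
  exact LinearMap.ext fun w => zero_mul w


local notation "X" => grassMul K

theorem x_swap (i j : ℕ) : X i * X j = -(X j * X i) :=
  eq_neg_of_add_eq_zero_left (x_swap_add i j)

theorem x_sq (i : ℕ) : X i * X i = 0 := by
  have h0 : grassGen K i * grassGen K i = 0 := ExteriorAlgebra.ι_sq_zero _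
  have e : X i * X i = LinearMap.mulLeft K (grassGen K i * grassGen K i) := by
    rw [LinearMap.mulLeft_mul, Module.End.mul_eq_comp]; rfl
  rw [e, h0]
  exact LinearMap.ext fun w => zero_mul w

/-- any single generator commutes with a product of two generators -/
theorem x_comm_pair (l m m' : ℕ) : X l * (X m * X m') = (X m * X m') * X l :=
  comm_of_two_anti (x_swap_add l m) (x_swap_add l m')

theorem pair_comm_pair (p q r s : ℕ) : (X p * X q) * (X r * X s) = (X r * X s) * (X p * X q) :=
  comm_mul (x_comm_pair r p q).symm (x_comm_pair s p q).symm

theorem xa_zero_left (j m : ℕ) : X j * (X j * X m) = 0 := by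
  rw [← mul_assoc, x_sq, zero_mul]

theorem pair_pair_zero (p q r : ℕ) : (X p * X q) * (X q * X r) = 0 := by
  rw [mul_assoc, xa_zero_left, mul_zero]

theorem pair_pair_zero' (p q r : ℕ) : (X p * X q) * (X r * X p) = 0 := by
  have h : X q * (X r * X p) = (X p * X q) * X r := by
    calc X q * (X r * X p) = X q * (-(X p * X r)) := by rw [x_swap r p]
      _ = -(X q * X p) * X r := by rw [mul_neg (α := Module.End K (GrassmannAlgebra K)), ← mul_assoc, neg_mul (α := Module.End K (GrassmannAlgebra K))]
      _ = (X p * X q) * X r := by rw [← x_swap]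
  rw [mul_assoc, h, ← mul_assoc, xa_zero_left, zero_mul]

theorem pair_self_zero (p q : ℕ) : (X p * X q) * (X p * X q) = 0 := by
  nth_rewrite 2 [x_swap p q]
  rw [mul_neg (α := Module.End K (GrassmannAlgebra K)), pair_pair_zero, neg_zero]

theorem a_xself_zero (j m : ℕ) : (X j * X m) * X j = 0 := by
  rw [← x_comm_pair, xa_zero_left]


/-- the span of monomials in the generators with indices `< n` -/
noncomputable def MM (K : Type*) [Field K] (n : ℕ) : Submodule K (GrassmannAlgebra K) :=
  Submodule.span K {w | ∃ L : List ℕ, (∀ j ∈ L, j < n) ∧ (L.map (grassGen K)).prod = w}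

theorem one_mem_MM (n : ℕ) : (1 : GrassmannAlgebra K) ∈ MM K n :=
  Submodule.subset_span ⟨[], by simp⟩

theorem MM_mono {n m : ℕ} (h : n ≤ m) : MM K n ≤ MM K m := by
  apply Submodule.span_mono
  rintro w ⟨L, hL, rfl⟩
  exact ⟨L, fun j hj => lt_of_lt_of_le (hL j hj) h, rfl⟩

theorem x_mem_MM {j n : ℕ} (hj : j < n) {w : GrassmannAlgebra K} (hw : w ∈ MM K n) :
    grassGen K j * w ∈ MM K n := by
  induction hw using Submodule.span_induction with
  | mem w hw =>
    obtain ⟨L, hL, rfl⟩ := hw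
    refine Submodule.subset_span ⟨j :: L, ?_, by simp⟩
    intro p hp
    rcases List.mem_cons.mp hp with h | h
    · omega
    · exact hL p h
  | zero => rw [mul_zero]; exact zero_mem _
  | add u w hu hw hu' hw' => rw [mul_add]; exact add_mem hu' hw'
  | smul c u hu hu' => rw [mul_smul_comm]; exact Submodule.smul_mem _ _ hu'

theorem mul_mem_MM {n : ℕ} {u w : GrassmannAlgebra K} (hu : u ∈ MM K n) (hw : w ∈ MM K n) :
    u * w ∈ MM K n := by
  induction hu using Submodule.span_induction with
  | mem u hu =>
    obtain ⟨L, hL, rfl⟩ := hu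
    induction L with
    | nil => simpa using hw
    | cons j L ih =>
      rw [List.map_cons, List.prod_cons, mul_assoc]
      exact x_mem_MM (hL j (by simp)) (ih (fun p hp => hL p (by simp [hp])))
  | zero => rw [zero_mul]; exact zero_mem _
  | add u u' hu hu' h1 h2 => rw [add_mul]; exact add_mem h1 h2
  | smul c u hu h1 => rw [smul_mul_assoc]; exact Submodule.smul_mem _ _ h1

theorem MM_le_adjoin (n : ℕ) :
    MM K n ≤ Subalgebra.toSubmodule (Algebra.adjoin K (grassGen K '' {j : ℕ | j < n})) := by
  rw [MM, Submodule.span_le]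
  rintro w ⟨L, hL, rfl⟩
  simp only [SetLike.mem_coe, Subalgebra.mem_toSubmodule]
  induction L with
  | nil => simpa using one_mem _
  | cons j L ih =>
    rw [List.map_cons, List.prod_cons]
    exact mul_mem (Algebra.subset_adjoin ⟨j, hL j (by simp), rfl⟩)
      (ih (fun p hp => hL p (by simp [hp])))

theorem exhaust (w : GrassmannAlgebra K) : ∃ n, w ∈ MM K n := by
  induction w using ExteriorAlgebra.induction with
  | algebraMap r =>
    exact ⟨0, by rw [Algebra.algebraMap_eq_smul_one]; exact Submodule.smul_mem _ _ (one_mem_MM 0)⟩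
  | ι m =>
    induction m using Finsupp.induction_linear with
    | zero => exact ⟨0, by rw [map_zero]; exact zero_mem _⟩
    | add f g hf hg =>
      obtain ⟨n1, h1⟩ := hf
      obtain ⟨n2, h2⟩ := hg
      exact ⟨max n1 n2, by
        rw [map_add]
        exact add_mem (MM_mono (le_max_left _ _) h1) (MM_mono (le_max_right _ _) h2)⟩
    | single a b =>
      refine ⟨a + 1, ?_⟩
      have : Finsupp.single a b = b • Finsupp.single a (1 : K) := by
        rw [Finsupp.smul_single', mul_one]
      rw [this, map_smul]
      refine Submodule.smul_mem _ _ (Submodule.subset_span ⟨[a], ?_, by simp [grassGen]⟩)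
      simp
  | mul u w hu hw =>
    obtain ⟨n1, h1⟩ := hu
    obtain ⟨n2, h2⟩ := hw
    exact ⟨max n1 n2, mul_mem_MM (MM_mono (le_max_left _ _) h1) (MM_mono (le_max_right _ _) h2)⟩
  | add u w hu hw =>
    obtain ⟨n1, h1⟩ := hu
    obtain ⟨n2, h2⟩ := hw
    exact ⟨max n1 n2, add_mem (MM_mono (le_max_left _ _) h1) (MM_mono (le_max_right _ _) h2)⟩

theorem end_eq_zero (T : Module.End K (GrassmannAlgebra K))
    (h : ∀ n, ∃ m, n ≤ m ∧ ∀ w ∈ MM K m, T w = 0) : T = 0 := by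
  apply LinearMap.ext
  intro w
  obtain ⟨n, hw⟩ := exhaust (K := K) w
  obtain ⟨m, hnm, hT⟩ := h n
  rw [LinearMap.zero_apply]
  exact hT w (MM_mono hnm hw)

theorem descent_zero (D g : ℕ → Module.End K (GrassmannAlgebra K)) (f : ℕ → ℕ)
    (hstep : ∀ t, D t = g t * D (t + 1)) (hvan : ∀ t, ∀ w ∈ MM K (f t), D t w = 0)
    (hf : ∀ n, ∃ t, n ≤ f t) : D 0 = 0 := by
  have key : ∀ t, ∃ S, D 0 = S * D t := by
    intro t
    induction t with
    | zero => exact ⟨1, (one_mul _).symm⟩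
    | succ t ih =>
      obtain ⟨S, hS⟩ := ih
      exact ⟨S * g t, by rw [hS, hstep t, mul_assoc]⟩
  apply end_eq_zero
  intro n
  obtain ⟨t, ht⟩ := hf n
  refine ⟨f t, ht, fun w hw => ?_⟩
  obtain ⟨S, hS⟩ := key t
  rw [hS, Module.End.mul_apply, hvan t w hw, map_zero]


section Ops

variable (d v : ℕ → Module.End K (GrassmannAlgebra K))

/-- helper: `s` commutes with `a` and anticommutes with `v'` gives zero anticommutator -/
theorem sandwich {R : Type*} [Ring R] {s a v' : R} (h2 : s * a = a * s)
    (h3 : s * v' + v' * s = 0) : s * (a * v') + (a * v') * s = 0 := by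
  rw [← mul_assoc, h2, mul_assoc, mul_assoc, ← mul_add, h3, mul_zero]

theorem sandwich' {R : Type*} [Ring R] {s a v' e : R} (h2 : s * a = a * s + e)
    (h3 : s * v' + v' * s = 0) : s * (a * v') + (a * v') * s = e * v' := by
  rw [← mul_assoc, h2, add_mul, mul_assoc, mul_assoc, add_assoc,
    add_comm (e * v'), ← add_assoc, ← mul_add, h3, mul_zero, zero_add]

theorem prod4 {R : Type*} [Ring R] {a1 V1 a2 V2 : R} (h6 : V1 * a2 = a2 * V1)
    (h8 : a1 * a2 = 0) : (a1 * V1) * (a2 * V2) = 0 := by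
  calc (a1 * V1) * (a2 * V2) = a1 * ((V1 * a2) * V2) := by
        rw [mul_assoc, ← mul_assoc V1 a2 V2]
    _ = a1 * (a2 * (V1 * V2)) := by rw [h6, mul_assoc]
    _ = 0 := by rw [← mul_assoc, h8, zero_mul]

theorem d_pair_comm (hd : ∀ i j : ℕ, d i * grassMul K j + grassMul K j * d i
      = if i = j then 1 else 0)
    {l m m' : ℕ} (h1 : l ≠ m) (h2 : l ≠ m') :
    d l * (X m * X m') = (X m * X m') * d l := by
  have e1 : d l * X m = -(X m * d l) := by
    have h := hd l m; rw [if_neg h1] at h; exact eq_neg_of_add_eq_zero_left h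
  have e2 : d l * X m' = -(X m' * d l) := by
    have h := hd l m'; rw [if_neg h2] at h; exact eq_neg_of_add_eq_zero_left h
  calc d l * (X m * X m') = (d l * X m) * X m' := (mul_assoc _ _ _).symm
    _ = -(X m * (d l * X m')) := by rw [e1, neg_mul (α := Module.End K (GrassmannAlgebra K)), mul_assoc]
    _ = X m * (X m' * d l) := by rw [e2, mul_neg (α := Module.End K (GrassmannAlgebra K)), neg_neg]
    _ = (X m * X m') * d l := (mul_assoc _ _ _).symm

theorem d_pair_self (hd : ∀ i j : ℕ, d i * grassMul K j + grassMul K j * d i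
      = if i = j then 1 else 0) (i : ℕ) :
    d i * (X i * X (i + 1)) = (X i * X (i + 1)) * d i + X (i + 1) := by
  have e1 : d i * X i = 1 - X i * d i := by
    have h := hd i i; rw [if_pos rfl] at h; exact eq_sub_of_add_eq h
  have e2 : d i * X (i + 1) = -(X (i + 1) * d i) := by
    have h := hd i (i + 1); rw [if_neg (by omega)] at h; exact eq_neg_of_add_eq_zero_left h
  calc d i * (X i * X (i + 1)) = (d i * X i) * X (i + 1) := (mul_assoc _ _ _).symm
    _ = X (i + 1) - X i * (d i * X (i + 1)) := by rw [e1, sub_mul, one_mul, mul_assoc]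
    _ = X (i + 1) + (X i * X (i + 1)) * d i := by
        rw [e2, mul_neg (α := Module.End K (GrassmannAlgebra K)), sub_neg_eq_add, mul_assoc]
    _ = (X i * X (i + 1)) * d i + X (i + 1) := add_comm _ _

theorem d_pair_succ (hd : ∀ i j : ℕ, d i * grassMul K j + grassMul K j * d i
      = if i = j then 1 else 0) (i : ℕ) :
    d (i + 1) * (X i * X (i + 1)) = (X i * X (i + 1)) * d (i + 1) + -(X i) := by
  have e1 : d (i + 1) * X i = -(X i * d (i + 1)) := by
    have h := hd (i + 1) i; rw [if_neg (by omega)] at h; exact eq_neg_of_add_eq_zero_left h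
  have e2 : d (i + 1) * X (i + 1) = 1 - X (i + 1) * d (i + 1) := by
    have h := hd (i + 1) (i + 1); rw [if_pos rfl] at h; exact eq_sub_of_add_eq h
  calc d (i + 1) * (X i * X (i + 1)) = (d (i + 1) * X i) * X (i + 1) := (mul_assoc _ _ _).symm
    _ = -(X i * (d (i + 1) * X (i + 1))) := by rw [e1, neg_mul (α := Module.End K (GrassmannAlgebra K)), mul_assoc]
    _ = -(X i * 1 - X i * (X (i + 1) * d (i + 1))) := by rw [e2, mul_sub]
    _ = (X i * X (i + 1)) * d (i + 1) + -(X i) := by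
        rw [mul_one, neg_sub, ← mul_assoc]; abel

theorem d_mem_MM (hd : ∀ i j : ℕ, d i * grassMul K j + grassMul K j * d i
      = if i = j then 1 else 0)
    (hd1 : ∀ i : ℕ, d i (1 : GrassmannAlgebra K) = 0)
    {i n : ℕ} {w : GrassmannAlgebra K} (hw : w ∈ MM K n) : d i w ∈ MM K n := by
  induction hw using Submodule.span_induction with
  | mem w hw =>
    obtain ⟨L, hL, rfl⟩ := hw
    induction L with
    | nil => simp only [List.map_nil, List.prod_nil, hd1]; exact zero_mem _
    | cons j L ih =>
      have hpmem : (L.map (grassGen K)).prod ∈ MM K n :=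
        Submodule.subset_span ⟨L, fun p hp => hL p (by simp [hp]), rfl⟩
      have hdp : d i ((L.map (grassGen K)).prod) ∈ MM K n :=
        ih (fun p hp => hL p (by simp [hp]))
      have key := LinearMap.congr_fun (hd i j) ((L.map (grassGen K)).prod)
      simp only [LinearMap.add_apply, Module.End.mul_apply, grassMul,
        LinearMap.mulLeft_apply] at key
      have : d i (grassGen K j * (L.map (grassGen K)).prod)
          = (if i = j then (1 : Module.End K (GrassmannAlgebra K)) else 0)
              ((L.map (grassGen K)).prod)
            - grassGen K j * d i ((L.map (grassGen K)).prod) := by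
        rw [← key]; abel
      rw [List.map_cons, List.prod_cons, this]
      refine sub_mem ?_ (x_mem_MM (hL j (by simp)) hdp)
      split
      · simpa using hpmem
      · simp only [LinearMap.zero_apply]; exact zero_mem _
  | zero => rw [map_zero]; exact zero_mem _
  | add u w hu hw hu' hw' => rw [map_add]; exact add_mem hu' hw'
  | smul c u hu hu' => rw [map_smul]; exact Submodule.smul_mem _ _ hu'

theorem v_kills (hv0 : ∀ i : ℕ, ∀ w ∈ Algebra.adjoin K (grassGen K '' {j : ℕ | j < i}), v i w = 0)
    {m : ℕ} {w : GrassmannAlgebra K} (hw : w ∈ MM K m) : v m w = 0 :=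
  hv0 m w (MM_le_adjoin m hw)

theorem xv_anti (hd : ∀ i j : ℕ, d i * grassMul K j + grassMul K j * d i
      = if i = j then 1 else 0)
    (hv : ∀ i : ℕ, v i = d i + grassMul K i * grassMul K (i + 1) * v (i + 3))
    (hv0 : ∀ i : ℕ, ∀ w ∈ Algebra.adjoin K (grassGen K '' {j : ℕ | j < i}), v i w = 0)
    {l j : ℕ} (hlj : l < j) : X l * v j + v j * X l = 0 := by
  have h := descent_zero (K := K)
    (fun t => X l * v (j + 3 * t) + v (j + 3 * t) * X l)
    (fun t => (X (j + 3 * t) * X (j + 3 * t + 1))) (fun t => j + 3 * t) ?_ ?_ ?_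
  · simpa using h
  · intro t
    have h1 : X l * d (j + 3 * t) + d (j + 3 * t) * X l = 0 := by
      have h := hd (j + 3 * t) l; rw [if_neg (by omega)] at h; rw [add_comm]; exact h
    have h2 : X l * (X (j + 3 * t) * X (j + 3 * t + 1))
        = (X (j + 3 * t) * X (j + 3 * t + 1)) * X l + 0 := by
      rw [x_comm_pair, add_zero]
    rw [hv (j + 3 * t),
      expand1 (X l) (d (j + 3 * t)) (X (j + 3 * t) * X (j + 3 * t + 1)) (v (j + 3 * t + 3)) 0 0 h1 h2,
      zero_mul, add_zero, zero_add, show j + 3 * (t + 1) = j + 3 * t + 3 from by ring]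
  · intro t w hw
    have e1 : v (j + 3 * t) w = 0 := v_kills v hv0 hw
    have e2 : v (j + 3 * t) (grassGen K l * w) = 0 :=
      v_kills v hv0 (x_mem_MM (by omega) hw)
    simp only [LinearMap.add_apply, Module.End.mul_apply, e1, map_zero, zero_add,
      grassMul, LinearMap.mulLeft_apply, e2, add_zero]
  · intro n; exact ⟨n, by omega⟩

theorem dv_anti (hd : ∀ i j : ℕ, d i * grassMul K j + grassMul K j * d i
      = if i = j then 1 else 0)
    (hd1 : ∀ i : ℕ, d i (1 : GrassmannAlgebra K) = 0)
    (hdd : ∀ i j : ℕ, d i * d j + d j * d i = 0)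
    (hv : ∀ i : ℕ, v i = d i + grassMul K i * grassMul K (i + 1) * v (i + 3))
    (hv0 : ∀ i : ℕ, ∀ w ∈ Algebra.adjoin K (grassGen K '' {j : ℕ | j < i}), v i w = 0)
    {l j : ℕ} (hlj : l < j) : d l * v j + v j * d l = 0 := by
  have h := descent_zero (K := K)
    (fun t => d l * v (j + 3 * t) + v (j + 3 * t) * d l)
    (fun t => (X (j + 3 * t) * X (j + 3 * t + 1))) (fun t => j + 3 * t) ?_ ?_ ?_
  · simpa using h
  · intro t
    have h1 : d l * d (j + 3 * t) + d (j + 3 * t) * d l = 0 := hdd l (j + 3 * t)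
    have h2 : d l * (X (j + 3 * t) * X (j + 3 * t + 1))
        = (X (j + 3 * t) * X (j + 3 * t + 1)) * d l + 0 := by
      rw [d_pair_comm d hd (by omega) (by omega), add_zero]
    rw [hv (j + 3 * t),
      expand1 (d l) (d (j + 3 * t)) (X (j + 3 * t) * X (j + 3 * t + 1)) (v (j + 3 * t + 3)) 0 0 h1 h2,
      zero_mul, add_zero, zero_add, show j + 3 * (t + 1) = j + 3 * t + 3 from by ring]
  · intro t w hw
    have e1 : v (j + 3 * t) w = 0 := v_kills v hv0 hw
    have e2 : v (j + 3 * t) (d l w) = 0 := v_kills v hv0 (d_mem_MM d hd hd1 hw)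
    simp only [LinearMap.add_apply, Module.End.mul_apply, e1, map_zero, zero_add, e2, add_zero]
  · intro n; exact ⟨n, by omega⟩


variable (hd : ∀ i j : ℕ, d i * grassMul K j + grassMul K j * d i = if i = j then 1 else 0)
  (hd1 : ∀ i : ℕ, d i (1 : GrassmannAlgebra K) = 0)
  (hdd : ∀ i j : ℕ, d i * d j + d j * d i = 0)
  (hv : ∀ i : ℕ, v i = d i + grassMul K i * grassMul K (i + 1) * v (i + 3))
  (hv0 : ∀ i : ℕ, ∀ w ∈ Algebra.adjoin K (grassGen K '' {j : ℕ | j < i}), v i w = 0)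

include hd hv hv0

theorem xv_self (j : ℕ) : X j * v j + v j * X j = 1 := by
  have h1 : X j * d j + d j * X j = 1 := by
    have h := hd j j; rw [if_pos rfl] at h; rw [add_comm]; exact h
  have h2 : X j * (X j * X (j + 1)) = (X j * X (j + 1)) * X j + 0 := by
    rw [xa_zero_left, a_xself_zero, add_zero]
  rw [hv j, expand1 (X j) (d j) (X j * X (j + 1)) (v (j + 3)) 1 0 h1 h2,
    zero_mul, add_zero, xv_anti d v hd hv hv0 (show j < j + 3 by omega), mul_zero, add_zero]

theorem v_comm_pair {p q j : ℕ} (hp : p < j) (hq : q < j) :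
    v j * (X p * X q) = (X p * X q) * v j :=
  comm_of_two_anti (by rw [add_comm]; exact xv_anti d v hd hv hv0 hp)
    (by rw [add_comm]; exact xv_anti d v hd hv hv0 hq)

theorem v_mul_pair_mixed {p m : ℕ} (hp : p < m) :
    v m * (X p * X m) = (X p * X m) * v m - X p := by
  have e1 : v m * X p = -(X p * v m) := by
    have h := xv_anti d v hd hv hv0 hp; rw [add_comm] at h; exact eq_neg_of_add_eq_zero_left h
  have e2 : v m * X m = 1 - X m * v m := by
    have h := xv_self d v hd hv hv0 m; rw [add_comm] at h; exact eq_sub_of_add_eq h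
  calc v m * (X p * X m) = (v m * X p) * X m := (mul_assoc _ _ _).symm
    _ = -(X p * (v m * X m)) := by rw [e1, neg_mul (α := Module.End K (GrassmannAlgebra K)), mul_assoc]
    _ = -(X p * 1 - X p * (X m * v m)) := by rw [e2, mul_sub]
    _ = (X p * X m) * v m - X p := by rw [mul_one, neg_sub, ← mul_assoc]

include hd1 hdd

theorem dv_step {i j : ℕ} (hij : i + 3 ≤ j) :
    v i * v j + v j * v i
      = (X i * X (i + 1)) * (v (i + 3) * v j + v j * v (i + 3)) := by
  have h1 : v j * d i + d i * v j = 0 := by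
    rw [add_comm]; exact dv_anti d v hd hd1 hdd hv hv0 (by omega)
  have h2 : v j * (X i * X (i + 1)) = (X i * X (i + 1)) * v j + 0 := by
    rw [v_comm_pair d v hd hv hv0 (by omega) (by omega), add_zero]
  have h := expand1 (v j) (d i) (X i * X (i + 1)) (v (i + 3)) 0 0 h1 h2
  rw [hv i, add_comm, h, zero_mul, add_zero, zero_add, add_comm (v j * v (i + 3))]

theorem P0 (i : ℕ) : v i * v i + v i * v i = 2 • (X (i + 1) * v (i + 3)) := by
  have hVa : v (i + 3) * (X i * X (i + 1)) = (X i * X (i + 1)) * v (i + 3) :=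
    v_comm_pair d v hd hv hv0 (by omega) (by omega)
  have e1 : d i * ((X i * X (i + 1)) * v (i + 3))
      = (X i * X (i + 1)) * (d i * v (i + 3)) + X (i + 1) * v (i + 3) := by
    rw [← mul_assoc, d_pair_self d hd, add_mul, mul_assoc]
  have e3 : ((X i * X (i + 1)) * v (i + 3)) * ((X i * X (i + 1)) * v (i + 3)) = 0 := by
    calc ((X i * X (i + 1)) * v (i + 3)) * ((X i * X (i + 1)) * v (i + 3))
        = (X i * X (i + 1)) * ((v (i + 3) * (X i * X (i + 1))) * v (i + 3)) := by
          rw [mul_assoc, ← mul_assoc (v (i + 3))]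
      _ = ((X i * X (i + 1)) * (X i * X (i + 1))) * (v (i + 3) * v (i + 3)) := by
          rw [hVa, mul_assoc (X i * X (i + 1)) (v (i + 3)) (v (i + 3)), ← mul_assoc]
      _ = 0 := by rw [pair_self_zero, zero_mul]
  have e4 : d i * v (i + 3) + v (i + 3) * d i = 0 :=
    dv_anti d v hd hd1 hdd hv hv0 (by omega)
  have hsq : (d i + (X i * X (i + 1)) * v (i + 3)) * (d i + (X i * X (i + 1)) * v (i + 3))
      = d i * d i + X (i + 1) * v (i + 3) := by
    calc (d i + (X i * X (i + 1)) * v (i + 3)) * (d i + (X i * X (i + 1)) * v (i + 3))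
        = d i * d i + (d i * ((X i * X (i + 1)) * v (i + 3))
            + (((X i * X (i + 1)) * v (i + 3)) * d i
              + ((X i * X (i + 1)) * v (i + 3)) * ((X i * X (i + 1)) * v (i + 3)))) := by
          noncomm_ring
      _ = d i * d i + ((X i * X (i + 1)) * (d i * v (i + 3)) + X (i + 1) * v (i + 3)
            + ((X i * X (i + 1)) * (v (i + 3) * d i) + 0)) := by
          rw [e1, mul_assoc (X i * X (i + 1)) (v (i + 3)) (d i), e3]
      _ = d i * d i + X (i + 1) * v (i + 3)
            + (X i * X (i + 1)) * (d i * v (i + 3) + v (i + 3) * d i) := by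
          rw [mul_add]; abel
      _ = d i * d i + X (i + 1) * v (i + 3) := by rw [e4, mul_zero, add_zero]
  rw [hv i, hsq]
  have h2 : d i * d i + d i * d i = 0 := hdd i i
  calc (d i * d i + X (i + 1) * v (i + 3)) + (d i * d i + X (i + 1) * v (i + 3))
      = (d i * d i + d i * d i) + (X (i + 1) * v (i + 3) + X (i + 1) * v (i + 3)) := by abel
    _ = X (i + 1) * v (i + 3) + X (i + 1) * v (i + 3) := by rw [h2, zero_add]
    _ = 2 • (X (i + 1) * v (i + 3)) := (two_smul ℕ _).symm

theorem Q0 (i : ℕ) : v i * v (i + 1) + v (i + 1) * v i = -(X i * v (i + 3)) := by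
  have g1 : d i * d (i + 1) + d (i + 1) * d i = 0 := hdd i (i + 1)
  have t2 : d i * ((X (i + 1) * X (i + 2)) * v (i + 4))
      + ((X (i + 1) * X (i + 2)) * v (i + 4)) * d i = 0 :=
    sandwich (d_pair_comm d hd (by omega) (by omega))
      (dv_anti d v hd hd1 hdd hv hv0 (by omega))
  have t3 : d (i + 1) * ((X i * X (i + 1)) * v (i + 3))
      + ((X i * X (i + 1)) * v (i + 3)) * d (i + 1) = -(X i) * v (i + 3) :=
    sandwich' (d_pair_succ d hd i) (dv_anti d v hd hd1 hdd hv hv0 (by omega))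
  have t4a : ((X i * X (i + 1)) * v (i + 3)) * ((X (i + 1) * X (i + 2)) * v (i + 4)) = 0 :=
    prod4 (v_comm_pair d v hd hv hv0 (by omega) (by omega)) (pair_pair_zero i (i + 1) (i + 2))
  have t4b : ((X (i + 1) * X (i + 2)) * v (i + 4)) * ((X i * X (i + 1)) * v (i + 3)) = 0 :=
    prod4 (v_comm_pair d v hd hv hv0 (by omega) (by omega)) (pair_pair_zero' (i + 1) (i + 2) i)
  rw [hv i, hv (i + 1)]
  calc (d i + (X i * X (i + 1)) * v (i + 3)) * (d (i + 1) + (X (i + 1) * X (i + 2)) * v (i + 4))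
        + (d (i + 1) + (X (i + 1) * X (i + 2)) * v (i + 4)) * (d i + (X i * X (i + 1)) * v (i + 3))
      = (d i * d (i + 1) + d (i + 1) * d i)
        + ((d i * ((X (i + 1) * X (i + 2)) * v (i + 4))
            + ((X (i + 1) * X (i + 2)) * v (i + 4)) * d i)
        + ((d (i + 1) * ((X i * X (i + 1)) * v (i + 3))
            + ((X i * X (i + 1)) * v (i + 3)) * d (i + 1))
        + (((X i * X (i + 1)) * v (i + 3)) * ((X (i + 1) * X (i + 2)) * v (i + 4))
            + ((X (i + 1) * X (i + 2)) * v (i + 4)) * ((X i * X (i + 1)) * v (i + 3))))) := by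
        noncomm_ring
    _ = -(X i * v (i + 3)) := by
        rw [g1, t2, t3, t4a, t4b, neg_mul (α := Module.End K (GrassmannAlgebra K))]; abel

theorem R0 (i : ℕ) : v i * v (i + 2) + v (i + 2) * v i
    = -((X i * X (i + 1)) * (X (i + 2) * v (i + 5))) := by
  have key : ∀ m : ℕ, v m * v (m + 2) + v (m + 2) * v m
      + (X m * X (m + 1)) * (X (m + 2) * v (m + 5))
      = ((X m * X (m + 1)) * (X (m + 2) * X (m + 3))) * (v (m + 3) * v (m + 5) + v (m + 5) * v (m + 3)) := by
    intro m
    have g1 : d m * d (m + 2) + d (m + 2) * d m = 0 := hdd m (m + 2)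
    have t2 : d m * ((X (m + 2) * X (m + 3)) * v (m + 5))
        + ((X (m + 2) * X (m + 3)) * v (m + 5)) * d m = 0 :=
      sandwich (d_pair_comm d hd (by omega) (by omega))
        (dv_anti d v hd hd1 hdd hv hv0 (by omega))
    have t3 : d (m + 2) * ((X m * X (m + 1)) * v (m + 3))
        + ((X m * X (m + 1)) * v (m + 3)) * d (m + 2) = 0 :=
      sandwich (d_pair_comm d hd (by omega) (by omega))
        (dv_anti d v hd hd1 hdd hv hv0 (by omega))
    have hmix : v (m + 3) * (X (m + 2) * X (m + 3))
        = (X (m + 2) * X (m + 3)) * v (m + 3) - X (m + 2) :=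
      v_mul_pair_mixed d v hd hv hv0 (by omega)
    have t4a : ((X m * X (m + 1)) * v (m + 3)) * ((X (m + 2) * X (m + 3)) * v (m + 5))
        = ((X m * X (m + 1)) * (X (m + 2) * X (m + 3))) * (v (m + 3) * v (m + 5))
          - (X m * X (m + 1)) * (X (m + 2) * v (m + 5)) := by
      calc ((X m * X (m + 1)) * v (m + 3)) * ((X (m + 2) * X (m + 3)) * v (m + 5))
          = (X m * X (m + 1)) * ((v (m + 3) * (X (m + 2) * X (m + 3))) * v (m + 5)) := by
            rw [mul_assoc, ← mul_assoc (v (m + 3))]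
        _ = (X m * X (m + 1)) * (((X (m + 2) * X (m + 3)) * v (m + 3)) * v (m + 5))
              - (X m * X (m + 1)) * (X (m + 2) * v (m + 5)) := by
            rw [hmix, sub_mul, mul_sub, mul_assoc (X (m + 2))]
        _ = ((X m * X (m + 1)) * (X (m + 2) * X (m + 3))) * (v (m + 3) * v (m + 5))
              - (X m * X (m + 1)) * (X (m + 2) * v (m + 5)) := by
            rw [mul_assoc (X (m + 2) * X (m + 3)), ← mul_assoc (X m * X (m + 1))]
    have t4b : ((X (m + 2) * X (m + 3)) * v (m + 5)) * ((X m * X (m + 1)) * v (m + 3))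
        = ((X m * X (m + 1)) * (X (m + 2) * X (m + 3))) * (v (m + 5) * v (m + 3)) := by
      calc ((X (m + 2) * X (m + 3)) * v (m + 5)) * ((X m * X (m + 1)) * v (m + 3))
          = (X (m + 2) * X (m + 3)) * ((v (m + 5) * (X m * X (m + 1))) * v (m + 3)) := by
            rw [mul_assoc, ← mul_assoc (v (m + 5))]
        _ = ((X (m + 2) * X (m + 3)) * (X m * X (m + 1))) * (v (m + 5) * v (m + 3)) := by
            rw [v_comm_pair d v hd hv hv0 (by omega) (by omega),
              mul_assoc (X m * X (m + 1)), ← mul_assoc]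
        _ = ((X m * X (m + 1)) * (X (m + 2) * X (m + 3))) * (v (m + 5) * v (m + 3)) := by
            rw [pair_comm_pair]
    have expand : v m * v (m + 2) + v (m + 2) * v m
        = (d m * d (m + 2) + d (m + 2) * d m)
          + ((d m * ((X (m + 2) * X (m + 3)) * v (m + 5))
              + ((X (m + 2) * X (m + 3)) * v (m + 5)) * d m)
          + ((d (m + 2) * ((X m * X (m + 1)) * v (m + 3))
              + ((X m * X (m + 1)) * v (m + 3)) * d (m + 2))
          + (((X m * X (m + 1)) * v (m + 3)) * ((X (m + 2) * X (m + 3)) * v (m + 5))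
              + ((X (m + 2) * X (m + 3)) * v (m + 5)) * ((X m * X (m + 1)) * v (m + 3))))) := by
      rw [hv m, hv (m + 2)]; noncomm_ring
    rw [expand, g1, t2, t3, t4a, t4b, mul_add]
    abel
  have hcl : ∀ t : ℕ,
      ((X (i + 3 * t) * X (i + 3 * t + 1)) * (X (i + 3 * t + 2) * X (i + 3 * t + 3)))
        * ((X (i + 3 * t + 3) * X (i + 3 * t + 4)) * (X (i + 3 * t + 5) * v (i + 3 * t + 8))) = 0 := by
    intro t
    rw [mul_assoc (X (i + 3 * t) * X (i + 3 * t + 1)), ← mul_assoc (X (i + 3 * t + 2) * X (i + 3 * t + 3)),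
      pair_pair_zero, zero_mul, mul_zero]
  have h := descent_zero (K := K)
    (fun t => v (i + 3 * t) * v (i + 3 * t + 2) + v (i + 3 * t + 2) * v (i + 3 * t)
      + (X (i + 3 * t) * X (i + 3 * t + 1)) * (X (i + 3 * t + 2) * v (i + 3 * t + 5)))
    (fun t => (X (i + 3 * t) * X (i + 3 * t + 1)) * (X (i + 3 * t + 2) * X (i + 3 * t + 3)))
    (fun t => i + 3 * t) ?_ ?_ ?_
  · simp only [Nat.mul_zero, Nat.add_zero] at h
    exact eq_neg_of_add_eq_zero_left h
  · intro t
    have hk := key (i + 3 * t)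
    rw [show i + 3 * (t + 1) = i + 3 * t + 3 from by ring,
      show i + 3 * t + 3 + 2 = i + 3 * t + 5 from by ring,
      show i + 3 * t + 3 + 1 = i + 3 * t + 4 from by ring,
      show i + 3 * t + 3 + 5 = i + 3 * t + 8 from by ring,
      show i + 3 * t + 2 + 1 = i + 3 * t + 3 from by ring]
    rw [hk, mul_add, mul_add, hcl t, add_zero, ← mul_add]
  · intro t w hw
    have e0 : v (i + 3 * t) w = 0 := v_kills v hv0 hw
    have e2 : v (i + 3 * t + 2) w = 0 := v_kills v hv0 (MM_mono (by omega) hw)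
    have e5 : v (i + 3 * t + 5) w = 0 := v_kills v hv0 (MM_mono (by omega) hw)
    simp only [LinearMap.add_apply, Module.End.mul_apply, e0, e2, e5, map_zero, add_zero, zero_add]
  · intro n; exact ⟨n, by omega⟩

end Ops

end Stmt17

/-- General multiplication rules for the pivot operators `v_i`, `i, k ≥ 0`:
`[v_i, v_{i+3k}] = 2 (∏_{l=0}^{k−1} x_{i+3l} x_{i+3l+1}) x_{i+3k+1} v_{i+3k+3}`,
`[v_i, v_{i+3k+1}] = −(∏_{l=0}^{k−1} x_{i+3l} x_{i+3l+1}) x_{i+3k} v_{i+3k+3}`,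
`[v_i, v_{i+3k+2}] = −(∏_{l=0}^{k} x_{i+3l} x_{i+3l+1}) x_{i+3k+2} v_{i+3k+5}`,
where the supercommutators of the odd operators `v_i`, `v_j` are anticommutators.
Here `∂_i` is the contraction characterized by `∂_i x_j + x_j ∂_i = δ_{ij}`, `∂_i(1)=0`,
`∂_i ∂_j + ∂_j ∂_i = 0`, and the pivot operators `v_i` are characterized by the
recursion `v_i = ∂_i + x_i x_{i+1} v_{i+3}` together with the fact that `v_i` kills the
subalgebra generated by the `x_j` with `j < i`.  Products in `Module.End` are
compositions of operators; the ordered products `∏` are `List` products. -/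
theorem stmt_17 (K : Type*) [Field K]
    (d v : ℕ → Module.End K (GrassmannAlgebra K))
    (hd : ∀ i j : ℕ, d i * grassMul K j + grassMul K j * d i = if i = j then 1 else 0)
    (hd1 : ∀ i : ℕ, d i (1 : GrassmannAlgebra K) = 0)
    (hdd : ∀ i j : ℕ, d i * d j + d j * d i = 0)
    (hv : ∀ i : ℕ, v i = d i + grassMul K i * grassMul K (i + 1) * v (i + 3))
    (hv0 : ∀ i : ℕ, ∀ w ∈ Algebra.adjoin K (grassGen K '' {j : ℕ | j < i}), v i w = 0) :
    ∀ i k : ℕ,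
      v i * v (i + 3 * k) + v (i + 3 * k) * v i
        = 2 • (((List.range k).map
              (fun l => grassMul K (i + 3 * l) * grassMul K (i + 3 * l + 1))).prod
            * (grassMul K (i + 3 * k + 1) * v (i + 3 * k + 3))) ∧
      v i * v (i + 3 * k + 1) + v (i + 3 * k + 1) * v i
        = -(((List.range k).map
              (fun l => grassMul K (i + 3 * l) * grassMul K (i + 3 * l + 1))).prod
            * (grassMul K (i + 3 * k) * v (i + 3 * k + 3))) ∧
      v i * v (i + 3 * k + 2) + v (i + 3 * k + 2) * v i
        = -(((List.range (k + 1)).map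
              (fun l => grassMul K (i + 3 * l) * grassMul K (i + 3 * l + 1))).prod
            * (grassMul K (i + 3 * k + 2) * v (i + 3 * k + 5))) := by
  intro i k
  induction k generalizing i with
  | zero =>
    refine ⟨?_, ?_, ?_⟩
    · simpa using Stmt17.P0 d v hd hd1 hdd hv hv0 i
    · simpa using Stmt17.Q0 d v hd hd1 hdd hv hv0 i
    · simpa using Stmt17.R0 d v hd hd1 hdd hv hv0 i
  | succ k ih =>
    obtain ⟨ihP, ihQ, ihR⟩ := ih (i + 3)
    have hprod : ∀ n : ℕ,
        ((List.range (n + 1)).map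
            (fun l => grassMul K (i + 3 * l) * grassMul K (i + 3 * l + 1))).prod
          = (grassMul K i * grassMul K (i + 1)) *
            ((List.range n).map
              (fun l => grassMul K (i + 3 + 3 * l) * grassMul K (i + 3 + 3 * l + 1))).prod := by
      intro n
      have hfun : ((fun l => grassMul K (i + 3 * l) * grassMul K (i + 3 * l + 1)) ∘ Nat.succ)
          = fun l => grassMul K (i + 3 + 3 * l) * grassMul K (i + 3 + 3 * l + 1) := by
        funext l
        simp only [Function.comp_apply, Nat.succ_eq_add_one,
          show i + 3 * (l + 1) = i + 3 + 3 * l from by ring]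
      rw [List.range_succ_eq_map, List.map_cons, List.prod_cons, List.map_map, hfun]
      norm_num
    refine ⟨?_, ?_, ?_⟩
    · rw [show i + 3 * (k + 1) = i + 3 + 3 * k from by ring,
        Stmt17.dv_step d v hd hd1 hdd hv hv0 (by omega), ihP, mul_smul_comm,
        ← mul_assoc, ← hprod k]
    · rw [show i + 3 * (k + 1) = i + 3 + 3 * k from by ring,
        Stmt17.dv_step d v hd hd1 hdd hv hv0 (by omega), ihQ, mul_neg (α := Module.End K (GrassmannAlgebra K)),
        ← mul_assoc, ← hprod k]
    · rw [show i + 3 * (k + 1) = i + 3 + 3 * k from by ring,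
        Stmt17.dv_step d v hd hd1 hdd hv hv0 (by omega), ihR, mul_neg (α := Module.End K (GrassmannAlgebra K)),
        ← mul_assoc, ← hprod (k + 1)]
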